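/- For the symmetric matrix pencil A(x) = [[x₀,x₁,x₂,x₃],[x₁,x₄,−x₃,x₂],[x₂,−x₃,x₅,0],[x₃,x₂,0,x₅]] in six variables, the quartic hypersurface det A(x) = 0 in ℙ⁵ is singular along the two complex conjugate 3-spaces V(x₂ + i x₃, x₅) and V(x₂ − i x₃, x₅), and along the quadratic surface V(x₀ − x₄, x₁, x₂² + x₃² − x₄x₅). -/

import Mathlib

open MvPolynomial Matrix Complex

/-- The symmetric matrix pencil
`A(x) = [[x₀,x₁,x₂,x₃],[x₁,x₄,−x₃,x₂],[x₂,−x₃,x₅,0],[x₃,x₂,0,x₅]]`. -/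
noncomputable def pencilC : Matrix (Fin 4) (Fin 4) (MvPolynomial (Fin 6) ℂ) :=
  !![X 0, X 1, X 2, X 3;
     X 1, X 4, -(X 3), X 2;
     X 2, -(X 3), X 5, 0;
     X 3, X 2, 0, X 5]

lemma pencilC_det_eq : pencilC.det =
    (X 2^2 + X 3^2)^2 - (X 0 + X 4) * X 5 * (X 2^2 + X 3^2)
      + X 0 * X 4 * X 5^2 - X 1^2 * X 5^2 := by
  simp [pencilC, Matrix.det_succ_row_zero, Fin.sum_univ_succ, Fin.succAbove, Fin.castSucc,
    Fin.castAdd, Fin.castLE]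
  ring

/-- The quartic `det A(x) = 0` in `ℂℙ⁵` is singular along the two complex conjugate
3-spaces `V(x₂ + ix₃, x₅)` and `V(x₂ − ix₃, x₅)`, and along the quadratic surface
`V(x₀ − x₄, x₁, x₂² + x₃² − x₄x₅)`. -/
theorem symmetroid_singular_two_threespaces_and_quadric :
    (∀ x : Fin 6 → ℂ, x 2 + I * x 3 = 0 → x 5 = 0 →
      eval x pencilC.det = 0 ∧ ∀ i : Fin 6, eval x (pderiv i pencilC.det) = 0) ∧
    (∀ x : Fin 6 → ℂ, x 2 - I * x 3 = 0 → x 5 = 0 →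
      eval x pencilC.det = 0 ∧ ∀ i : Fin 6, eval x (pderiv i pencilC.det) = 0) ∧
    (∀ x : Fin 6 → ℂ, x 0 = x 4 → x 1 = 0 → x 2 ^ 2 + x 3 ^ 2 = x 4 * x 5 →
      eval x pencilC.det = 0 ∧ ∀ i : Fin 6, eval x (pderiv i pencilC.det) = 0) := by
  refine ⟨fun x h2 h5 => ?_, fun x h2 h5 => ?_, fun x h0 h1 h2 => ?_⟩
  · have key : x 2 ^ 2 + x 3 ^ 2 = 0 := by
      linear_combination (x 2 - I * x 3) * h2 + x 3 ^ 2 * Complex.I_sq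
    constructor
    · rw [pencilC_det_eq]
      simp only [eval_add, eval_sub, eval_mul, eval_pow, eval_X]
      linear_combination (x 2 ^ 2 + x 3 ^ 2 - (x 0 + x 4) * x 5) * key +
        (x 0 * x 4 * x 5 - x 1 ^ 2 * x 5) * h5
    · intro i
      rw [pencilC_det_eq]
      fin_cases i <;>
        simp [pderiv_X, Pi.single_apply]
      · linear_combination (-(x 5)) * key + (x 4 * x 5) * h5
      · exact Or.inl h5
      · linear_combination (4 * x 2) * key + (-(2 * x 2 * (x 0 + x 4))) * h5
      · linear_combination (4 * x 3) * key + (-(2 * x 3 * (x 0 + x 4))) * h5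
      · linear_combination (-(x 5)) * key + (x 0 * x 5) * h5
      · linear_combination (-(x 0 + x 4)) * key + (2 * x 0 * x 4 - 2 * x 1 ^ 2) * h5
  · have key : x 2 ^ 2 + x 3 ^ 2 = 0 := by
      linear_combination (x 2 + I * x 3) * h2 + x 3 ^ 2 * Complex.I_sq
    constructor
    · rw [pencilC_det_eq]
      simp only [eval_add, eval_sub, eval_mul, eval_pow, eval_X]
      linear_combination (x 2 ^ 2 + x 3 ^ 2 - (x 0 + x 4) * x 5) * key +
        (x 0 * x 4 * x 5 - x 1 ^ 2 * x 5) * h5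
    · intro i
      rw [pencilC_det_eq]
      fin_cases i <;>
        simp [pderiv_X, Pi.single_apply]
      · linear_combination (-(x 5)) * key + (x 4 * x 5) * h5
      · exact Or.inl h5
      · linear_combination (4 * x 2) * key + (-(2 * x 2 * (x 0 + x 4))) * h5
      · linear_combination (4 * x 3) * key + (-(2 * x 3 * (x 0 + x 4))) * h5
      · linear_combination (-(x 5)) * key + (x 0 * x 5) * h5
      · linear_combination (-(x 0 + x 4)) * key + (2 * x 0 * x 4 - 2 * x 1 ^ 2) * h5
  · constructor
    · rw [pencilC_det_eq]
      simp only [eval_add, eval_sub, eval_mul, eval_pow, eval_X]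
      linear_combination (x 2 ^ 2 + x 3 ^ 2 - x 4 * x 5) * h2 +
        (-(x 5 * (x 2 ^ 2 + x 3 ^ 2)) + x 4 * x 5 ^ 2) * h0 + (-(x 1 * x 5 ^ 2)) * h1
    · intro i
      rw [pencilC_det_eq]
      fin_cases i <;>
        simp [pderiv_X, Pi.single_apply]
      · linear_combination (-(x 5)) * h2
      · exact Or.inr h1
      · linear_combination (4 * x 2) * h2 + (-(2 * x 2 * x 5)) * h0
      · linear_combination (4 * x 3) * h2 + (-(2 * x 3 * x 5)) * h0
      · linear_combination (-(x 5)) * h2 + (x 5 ^ 2) * h0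
      · linear_combination (-(x 0 + x 4)) * h2 + (x 4 * x 5) * h0 + (-(2 * x 1 * x 5)) * h1
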